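/- Let L : M_n(ℂ) → M_m(ℂ) be a linear map and 1 ≤ k ≤ n. Then L is k-positive (i.e., the map I_k ⊗ L on M_k(M_n(ℂ)) maps positive semidefinite matrices to positive semidefinite matrices) if and only if for every vector x = ∑_{p=1}^k y_p ⊗ z_p with y_p ∈ ℂ^n and z_p ∈ ℂ^m, one has ⟨x| C(L) |x⟩ ≥ 0, where C(L) = (L(E_{ij}))_{1≤i,j≤n} is the Choi matrix of L. -/

import Mathlib

open Matrix ComplexOrder

section aux

variable {n m k : ℕ} (L : Matrix (Fin n) (Fin n) ℂ →ₗ[ℂ] Matrix (Fin m) (Fin m) ℂ)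

/-- A complex matrix with nonnegative quadratic form is Hermitian. -/
lemma herm_of_nonneg {ι : Type*} [Fintype ι] [DecidableEq ι] {M : Matrix ι ι ℂ}
    (h : ∀ x : ι → ℂ, 0 ≤ star x ⬝ᵥ M.mulVec x) : M.IsHermitian := by
  rw [Matrix.isHermitian_iff_isSymmetric, LinearMap.isSymmetric_iff_inner_map_self_real]
  rw [(WithLp.equiv 2 (ι → ℂ)).symm.surjective.forall]
  intro x
  change starRingEnd ℂ (x ⬝ᵥ star (M *ᵥ x)) = x ⬝ᵥ star (M *ᵥ x)
  rw [dotProduct_comm, Matrix.star_dotProduct]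
  have h2 := h x
  rw [Complex.nonneg_iff] at h2
  exact Complex.ext (by simp) (by simp [← h2.2])

/-- Entry of the Choi matrix. -/
def cho (i j : Fin n) (a b : Fin m) : ℂ := L (Matrix.single i j 1) a b

lemma Ldecomp (X : Matrix (Fin n) (Fin n) ℂ) (a b : Fin m) :
    L X a b = ∑ i, ∑ j, X i j * cho L i j a b := by
  conv_lhs => rw [Matrix.matrix_eq_sum_single X]
  rw [map_sum, Matrix.sum_apply]
  refine Finset.sum_congr rfl fun i _ => ?_
  rw [map_sum, Matrix.sum_apply]
  refine Finset.sum_congr rfl fun j _ => ?_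
  have h1 : Matrix.single i j (X i j) = X i j • Matrix.single i j (1:ℂ) := by
    rw [Matrix.smul_single, smul_eq_mul, mul_one]
  rw [h1, _root_.map_smul, Matrix.smul_apply, smul_eq_mul]; rfl

/-- Core computation: the quadratic form of the block matrix built from the rank-one matrix
`(s,t) ↦ star (v s) * v t` equals the Choi quadratic form at the corresponding
Schmidt vector. -/
lemma core (v : Fin k × Fin n → ℂ) (z : Fin k → Fin m → ℂ) :
    star (fun p : Fin k × Fin m => z p.1 p.2) ⬝ᵥ
      (Matrix.of fun p q : Fin k × Fin m =>
        L (Matrix.of fun x y => star (v (p.1, x)) * v (q.1, y)) p.2 q.2).mulVec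
      (fun p : Fin k × Fin m => z p.1 p.2)
    = star (fun p : Fin n × Fin m => ∑ i, v (i, p.1) * z i p.2) ⬝ᵥ
        (Matrix.of fun p q : Fin n × Fin m =>
            L (Matrix.single p.1 q.1 1) p.2 q.2).mulVec
        (fun p : Fin n × Fin m => ∑ i, v (i, p.1) * z i p.2) := by
  simp only [show ∀ (i j : Fin n) (a b : Fin m),
      L (Matrix.single i j 1) a b = cho L i j a b from fun _ _ _ _ => rfl]
  simp only [dotProduct, Matrix.mulVec, Matrix.of_apply, Pi.star_apply,
    Fintype.sum_prod_type, Ldecomp, Finset.sum_mul, Finset.mul_sum, star_sum, star_mul']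
  trans (∑ x : Fin k × Fin m × Fin k × Fin m × Fin n × Fin n,
      star (z x.1 x.2.1) * (star (v (x.1, x.2.2.2.2.1)) * v (x.2.2.1, x.2.2.2.2.2) *
        cho L x.2.2.2.2.1 x.2.2.2.2.2 x.2.1 x.2.2.2.1 * z x.2.2.1 x.2.2.2.1))
  · simp only [Fintype.sum_prod_type]
  trans (∑ x : Fin n × Fin m × Fin n × Fin m × Fin k × Fin k,
      star (v (x.2.2.2.2.2, x.1)) * star (z x.2.2.2.2.2 x.2.1) *
        (cho L x.1 x.2.2.1 x.2.1 x.2.2.2.1 * (v (x.2.2.2.2.1, x.2.2.1) * z x.2.2.2.2.1 x.2.2.2.1)))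
  · exact Fintype.sum_equiv
      ⟨fun x => (x.2.2.2.2.1, x.2.1, x.2.2.2.2.2, x.2.2.2.1, x.2.2.1, x.1),
       fun x => (x.2.2.2.2.2, x.2.1, x.2.2.2.2.1, x.2.2.2.1, x.1, x.2.2.1),
       fun x => rfl, fun x => rfl⟩ _ _
      (fun x => by obtain ⟨p, a, q, b, i, j⟩ := x; simp only [Equiv.coe_fn_mk]; ring)
  · simp only [Fintype.sum_prod_type]

end aux

open Matrix ComplexOrder in
/-- `L` is `k`-positive iff `⟨x|C(L)|x⟩ ≥ 0` for all vectors `x`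
of Schmidt rank at most `k`. -/
theorem stmt_0 {n m k : ℕ} (hk1 : 1 ≤ k) (hkn : k ≤ n)
    (L : Matrix (Fin n) (Fin n) ℂ →ₗ[ℂ] Matrix (Fin m) (Fin m) ℂ) :
    (∀ A : Matrix (Fin k × Fin n) (Fin k × Fin n) ℂ, A.PosSemidef →
      (Matrix.of fun p q : Fin k × Fin m =>
        L (Matrix.of fun x y => A (p.1, x) (q.1, y)) p.2 q.2).PosSemidef)
    ↔ (∀ (y : Fin k → Fin n → ℂ) (z : Fin k → Fin m → ℂ),
        0 ≤ star (fun p : Fin n × Fin m => ∑ i, y i p.1 * z i p.2) ⬝ᵥ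
          (Matrix.of fun p q : Fin n × Fin m =>
              L (Matrix.single p.1 q.1 1) p.2 q.2).mulVec
            (fun p : Fin n × Fin m => ∑ i, y i p.1 * z i p.2)) := by
  constructor
  · -- k-positive ⟹ Choi form nonneg on Schmidt rank ≤ k vectors
    intro h y z
    set v : Fin k × Fin n → ℂ := fun s => y s.1 s.2 with hv
    set A : Matrix (Fin k × Fin n) (Fin k × Fin n) ℂ :=
      Matrix.of fun s t => star (v s) * v t with hA
    have hApsd : A.PosSemidef := by
      refine Matrix.PosSemidef.of_dotProduct_mulVec_nonneg ?_ ?_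
      · ext s t
        simp [hA, Matrix.conjTranspose_apply, mul_comm]
      · intro w
        have hq : star w ⬝ᵥ A.mulVec w = star (v ⬝ᵥ w) * (v ⬝ᵥ w) := by
          simp only [hA, dotProduct, Matrix.mulVec, Matrix.of_apply, Pi.star_apply,
            star_sum, star_mul', Finset.sum_mul, Finset.mul_sum]
          rw [Finset.sum_comm]
          exact Finset.sum_congr rfl fun s _ => Finset.sum_congr rfl fun t _ => by ring
        rw [hq]
        exact star_mul_self_nonneg _
    have hB := (h A hApsd).dotProduct_mulVec_nonneg (fun p : Fin k × Fin m => z p.1 p.2)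
    rw [hA] at hB
    simp only [Matrix.of_apply] at hB
    rwa [core L v z] at hB
  · -- Choi form nonneg on Schmidt rank ≤ k vectors ⟹ k-positive
    intro h A hA
    obtain ⟨D, hD⟩ : ∃ D : Matrix (Fin k × Fin n) (Fin k × Fin n) ℂ, A = Dᴴ * D := by
      open scoped MatrixOrder in exact CStarAlgebra.nonneg_iff_eq_star_mul_self.mp hA.nonneg
    have key : ∀ x : Fin k × Fin m → ℂ,
        0 ≤ star x ⬝ᵥ (Matrix.of fun p q : Fin k × Fin m =>
          L (Matrix.of fun i j => A (p.1, i) (q.1, j)) p.2 q.2).mulVec x := by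
      intro x
      have hBsum : (Matrix.of fun p q : Fin k × Fin m =>
            L (Matrix.of fun i j => A (p.1, i) (q.1, j)) p.2 q.2)
          = ∑ r : Fin k × Fin n, Matrix.of fun p q : Fin k × Fin m =>
              L (Matrix.of fun i j => star (D r (p.1, i)) * D r (q.1, j)) p.2 q.2 := by
        ext p q
        rw [Matrix.sum_apply]
        have hblock : (Matrix.of fun i j => A (p.1, i) (q.1, j))
            = ∑ r : Fin k × Fin n,
                Matrix.of fun i j => star (D r (p.1, i)) * D r (q.1, j) := by
          ext i j
          rw [Matrix.sum_apply]
          simp [hD, Matrix.mul_apply, Matrix.conjTranspose_apply]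
        simp only [Matrix.of_apply, hblock, map_sum, Matrix.sum_apply]
      rw [hBsum]
      have hmv : (∑ r : Fin k × Fin n, Matrix.of fun p q : Fin k × Fin m =>
            L (Matrix.of fun i j => star (D r (p.1, i)) * D r (q.1, j)) p.2 q.2) *ᵥ x
          = ∑ r : Fin k × Fin n, (Matrix.of fun p q : Fin k × Fin m =>
            L (Matrix.of fun i j => star (D r (p.1, i)) * D r (q.1, j)) p.2 q.2) *ᵥ x :=
        map_sum (Matrix.mulVec.addMonoidHomLeft x) _ _
      rw [hmv]
      have hdp : star x ⬝ᵥ (∑ r : Fin k × Fin n, (Matrix.of fun p q : Fin k × Fin m =>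
            L (Matrix.of fun i j => star (D r (p.1, i)) * D r (q.1, j)) p.2 q.2) *ᵥ x)
          = ∑ r : Fin k × Fin n, star x ⬝ᵥ (Matrix.of fun p q : Fin k × Fin m =>
            L (Matrix.of fun i j => star (D r (p.1, i)) * D r (q.1, j)) p.2 q.2) *ᵥ x := by
        simp only [dotProduct, Finset.sum_apply, Finset.mul_sum, Pi.star_apply]
        exact Finset.sum_comm
      rw [hdp]
      refine Finset.sum_nonneg fun r _ => ?_
      have := core L (fun s => D r s) (fun p a => x (p, a))
      rw [show (fun p : Fin k × Fin m => x (p.1, p.2)) = x from rfl] at this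
      rw [this]
      exact h (fun i j => D r (i, j)) (fun p a => x (p, a))
    exact .of_dotProduct_mulVec_nonneg (herm_of_nonneg key) key
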